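/- Along the straight-line geodesic φ(s) = (1−s)ψ₁ + s·φ(1), φ̃(s) = (1−s)ψ̃₁ + s·φ̃(1), with ⟨ψ̃₁|ψ₁⟩ = ⟨φ̃(1)|φ(1)⟩ = 1, ⟨φ̃|φ'⟩ = ⟨φ̃'|φ⟩ = 0 everywhere, the 'in-phase' quantity q(s) = ⟨ψ̃₁|φ(s)⟩ / ⟨φ̃(s)|ψ₁⟩ equals 1 for all s ∈ [0,1] where the denominator is nonzero; i.e., ⟨ψ̃₁|φ(s)⟩ = ⟨φ̃(s)|ψ₁⟩ for all s ∈ [0,1]. -/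
import Mathlib


/-- Standard Hermitian inner product on ℂ^N, conjugate-linear in the first slot. -/
noncomputable def inn {N : ℕ} (x y : Fin N → ℂ) : ℂ := ∑ i, (starRingEnd ℂ) (x i) * y i

lemma inn_add_left {N : ℕ} (x y z : Fin N → ℂ) : inn (x + y) z = inn x z + inn y z := by
  simp [inn, add_mul, Finset.sum_add_distrib]

lemma inn_smul_left {N : ℕ} (c : ℂ) (x z : Fin N → ℂ) :
    inn (c • x) z = (starRingEnd ℂ) c * inn x z := by
  simp [inn, Finset.mul_sum, mul_assoc]

lemma inn_sub_left {N : ℕ} (x y z : Fin N → ℂ) : inn (x - y) z = inn x z - inn y z := by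
  simp [inn, sub_mul, Finset.sum_sub_distrib]

lemma inn_add_right {N : ℕ} (x y z : Fin N → ℂ) : inn x (y + z) = inn x y + inn x z := by
  simp [inn, mul_add, Finset.sum_add_distrib]

lemma inn_smul_right {N : ℕ} (c : ℂ) (x z : Fin N → ℂ) :
    inn x (c • z) = c * inn x z := by
  simp only [inn, Pi.smul_apply, smul_eq_mul, Finset.mul_sum]; exact Finset.sum_congr rfl fun i _ => by ring

lemma inn_sub_right {N : ℕ} (x y z : Fin N → ℂ) : inn x (y - z) = inn x y - inn x z := by
  simp [inn, mul_sub, Finset.sum_sub_distrib]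

/-- Along the straight-line geodesic φ(s) = (1−s)ψ₁ + s·φ₁,
φ̃(s) = (1−s)ψ̃₁ + s·φ̃₁ with ⟨ψ̃₁|ψ₁⟩ = ⟨φ̃₁|φ₁⟩ = 1 and vanishing connection
⟨φ̃(s)|φ'(s)⟩ = 0 = ⟨φ̃'(s)|φ(s)⟩ on [0,1], the states stay "in phase":
⟨ψ̃₁|φ(s)⟩ = ⟨φ̃(s)|ψ₁⟩ for all s ∈ [0,1]. -/
theorem stmt10 {N : ℕ} (ψ1 ψt1 φ1 φt1 : Fin N → ℂ)
    (h1 : inn ψt1 ψ1 = 1) (h2 : inn φt1 φ1 = 1)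
    (hconn : ∀ s : ℝ, s ∈ Set.Icc (0:ℝ) 1 →
      inn (((1:ℂ) - (s:ℂ)) • ψt1 + (s:ℂ) • φt1) (φ1 - ψ1) = 0)
    (hconn' : ∀ s : ℝ, s ∈ Set.Icc (0:ℝ) 1 →
      inn (φt1 - ψt1) (((1:ℂ) - (s:ℂ)) • ψ1 + (s:ℂ) • φ1) = 0) :
    ∀ s : ℝ, s ∈ Set.Icc (0:ℝ) 1 →
      inn ψt1 (((1:ℂ) - (s:ℂ)) • ψ1 + (s:ℂ) • φ1)
        = inn (((1:ℂ) - (s:ℂ)) • ψt1 + (s:ℂ) • φt1) ψ1 := by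
  have ha := hconn 0 (by norm_num)
  have hb := hconn 1 (by norm_num)
  simp only [inn_add_left, inn_add_right, inn_smul_left, inn_smul_right, inn_sub_left,
    inn_sub_right, map_sub, map_one, Complex.conj_ofReal] at ha hb ⊢
  -- ha : ⟨ψ̃₁|φ₁⟩ = 1,  hb : ⟨φ̃₁|ψ₁⟩ = 1
  have ha' : inn ψt1 φ1 = 1 := by
    push_cast at ha; linear_combination ha + h1
  have hb' : inn φt1 ψ1 = 1 := by
    push_cast at hb; linear_combination -hb + h2
  intro s _
  rw [h1, ha', hb']
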